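/- Assume q is odd and let R(y) be the 9×9 commutator matrix defined in the context, for y = (y_0, ..., y_8) ∈ F^9. Then R(y) has rank ≤ 4 if and only if the following seven polynomial expressions all vanish at y: y_0·y_3 − y_4·y_5; y_1·y_2 − y_4·y_6; y_0·y_2 − y_1·y_3 − y_4·y_7; y_2^2·y_5 − y_3^2·y_6 − y_2·y_3·y_7; y_1^2·y_5 − y_0^2·y_6 + y_0·y_1·y_7; y_1·y_3^2 − y_2·y_4·y_5 + y_3·y_4·y_7; y_1^2·y_3 − y_0·y_4·y_6 + y_1·y_4·y_7. -/

import Mathlib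

section Stmt16Aux

open Matrix

set_option maxRecDepth 8000

private lemma val_three_fin_four : ((3 : Fin 4) : ℕ) = 3 := rfl
private lemma val_two_fin_three : ((2 : Fin 3) : ℕ) = 2 := rfl
private lemma vec5_mk3 {α : Type*} (a b c d e : α) (h : 3 < 5) :
    ![a, b, c, d, e] ⟨3, h⟩ = d := rfl
private lemma vec4_mk3 {α : Type*} (a b c d : α) (h : 3 < 4) :
    ![a, b, c, d] ⟨3, h⟩ = d := rfl
private lemma vec5_mk2 {α : Type*} (a b c d e : α) (h : 2 < 5) :
    ![a, b, c, d, e] ⟨2, h⟩ = c := rfl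



/-- The `9×9` commutator matrix `R(y)` of the Lie centralizer of the nilpotent element
`C_{[2,1,1]}(0)`. -/
def R211 (F : Type*) [Field F] (y : Fin 9 → F) : Matrix (Fin 9) (Fin 9) F :=
  !![0, 0, y 4, 0, 0, 0, y 1, y 0, -2 * y 0;
     0, 0, 0, y 4, 0, y 0, 0, -y 1, -2 * y 1;
     -y 4, 0, 0, 0, 0, -y 3, 0, -y 2, 2 * y 2;
     0, -y 4, 0, 0, 0, 0, -y 2, y 3, 2 * y 3;
     0, 0, 0, 0, 0, 0, 0, 0, 0;
     0, -y 0, y 3, 0, 0, 0, -y 7, 2 * y 5, 0;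
     -y 1, 0, 0, y 2, 0, y 7, 0, -2 * y 6, 0;
     -y 0, y 1, y 2, -y 3, 0, -2 * y 5, 2 * y 6, 0, 0;
     2 * y 0, 2 * y 1, -2 * y 2, -2 * y 3, 0, 0, 0, 0, 0]



lemma aux_det_submatrix_eq_zero {F : Type*} [Field F] {A : Matrix (Fin 9) (Fin 9) F}
    (h : A.rank ≤ 4) (f g : Fin 5 → Fin 9) : (A.submatrix f g).det = 0 := by
  by_contra hd
  have key : A.submatrix f g =
      (Matrix.of fun i k => if k = f i then (1 : F) else 0) * A *
        (Matrix.of fun k j => if k = g j then (1 : F) else 0) := by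
    ext i j
    simp [Matrix.mul_apply, ite_mul, mul_ite, Finset.sum_ite_eq, Finset.sum_ite_eq']
  have hle : (A.submatrix f g).rank ≤ A.rank := by
    rw [key]
    exact le_trans (Matrix.rank_mul_le_left _ _) (Matrix.rank_mul_le_right _ _)
  have h5 : (A.submatrix f g).rank = 5 := by
    simpa using Matrix.rank_of_isUnit _
      ((Matrix.isUnit_iff_isUnit_det _).2 (isUnit_iff_ne_zero.2 hd))
  omega

lemma aux_rank_le_four {F : Type*} [Field F] {A : Matrix (Fin 9) (Fin 9) F} {c : F}
    (hc : c ≠ 0) (B : Matrix (Fin 9) (Fin 4) F) (C : Matrix (Fin 4) (Fin 9) F)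
    (h : c • A = B * C) : A.rank ≤ 4 := by
  have hd : c • A = Matrix.diagonal (fun _ : Fin 9 => c) * A := by
    ext i j
    simp [Matrix.diagonal_mul]
  have h1 : (c • A).rank = A.rank := by
    rw [hd]
    exact Matrix.rank_mul_eq_right_of_isUnit_det _ _
      (by rw [Matrix.det_diagonal, Finset.prod_const]
          exact isUnit_iff_ne_zero.2 (pow_ne_zero _ hc))
  calc A.rank = (c • A).rank := h1.symm
    _ = (B * C).rank := by rw [h]
    _ ≤ B.rank := Matrix.rank_mul_le_left _ _
    _ ≤ 4 := by simpa using B.rank_le_card_width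

lemma d1a (F : Type*) [Field F] (y : Fin 9 → F) :
    ((R211 F y).submatrix ![0,1,2,3,5] ![0,1,2,3,7]).det = (-2 : F) * (y 4 ^ 3 * (y 0 * y 3 - y 4 * y 5)) := by
  have h : (R211 F y).submatrix ![0,1,2,3,5] ![0,1,2,3,7] =
      (!![0, 0, y 4, 0, y 0;
         0, 0, 0, y 4, -y 1;
         -y 4, 0, 0, 0, -y 2;
         0, -y 4, 0, 0, y 3;
         0, -y 0, y 3, 0, 2*y 5] : Matrix (Fin 5) (Fin 5) F) := by
    ext i j
    fin_cases i <;> fin_cases j <;> rfl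
  rw [h]
  simp [Matrix.det_succ_row_zero, Fin.sum_univ_succ]
  simp (config := { decide := true }) [Fin.succAbove, Fin.lt_def]
  ring

lemma d1b (F : Type*) [Field F] (y : Fin 9 → F) :
    ((R211 F y).submatrix ![0,1,3,5,7] ![0,2,5,7,8]).det = (-4 : F) * (y 0 ^ 2 * y 3 * (y 0 * y 3 - y 4 * y 5)) := by
  have h : (R211 F y).submatrix ![0,1,3,5,7] ![0,2,5,7,8] =
      (!![0, y 4, 0, y 0, (-2)*y 0;
         0, 0, y 0, -y 1, (-2)*y 1;
         0, 0, 0, y 3, 2*y 3;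
         0, y 3, 0, 2*y 5, 0;
         -y 0, y 2, (-2)*y 5, 0, 0] : Matrix (Fin 5) (Fin 5) F) := by
    ext i j
    fin_cases i <;> fin_cases j <;> rfl
  rw [h]
  simp [Matrix.det_succ_row_zero, Fin.sum_univ_succ]
  simp (config := { decide := true }) [Fin.succAbove, Fin.lt_def]
  ring

lemma d2a (F : Type*) [Field F] (y : Fin 9 → F) :
    ((R211 F y).submatrix ![0,1,2,3,6] ![0,1,2,3,7]).det = (2 : F) * (y 4 ^ 3 * (y 1 * y 2 - y 4 * y 6)) := by
  have h : (R211 F y).submatrix ![0,1,2,3,6] ![0,1,2,3,7] =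
      (!![0, 0, y 4, 0, y 0;
         0, 0, 0, y 4, -y 1;
         -y 4, 0, 0, 0, -y 2;
         0, -y 4, 0, 0, y 3;
         -y 1, 0, 0, y 2, (-2)*y 6] : Matrix (Fin 5) (Fin 5) F) := by
    ext i j
    fin_cases i <;> fin_cases j <;> rfl
  rw [h]
  simp [Matrix.det_succ_row_zero, Fin.sum_univ_succ]
  simp (config := { decide := true }) [Fin.succAbove, Fin.lt_def]
  ring

lemma d2b (F : Type*) [Field F] (y : Fin 9 → F) :
    ((R211 F y).submatrix ![0,1,2,6,7] ![1,3,6,7,8]).det = (4 : F) * (y 1 ^ 2 * y 2 * (y 1 * y 2 - y 4 * y 6)) := by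
  have h : (R211 F y).submatrix ![0,1,2,6,7] ![1,3,6,7,8] =
      (!![0, 0, y 1, y 0, (-2)*y 0;
         0, y 4, 0, -y 1, (-2)*y 1;
         0, 0, 0, -y 2, 2*y 2;
         0, y 2, 0, (-2)*y 6, 0;
         y 1, -y 3, 2*y 6, 0, 0] : Matrix (Fin 5) (Fin 5) F) := by
    ext i j
    fin_cases i <;> fin_cases j <;> rfl
  rw [h]
  simp [Matrix.det_succ_row_zero, Fin.sum_univ_succ]
  simp (config := { decide := true }) [Fin.succAbove, Fin.lt_def]
  ring

lemma d3a (F : Type*) [Field F] (y : Fin 9 → F) :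
    ((R211 F y).submatrix ![0,1,2,3,5] ![0,1,2,3,6]).det = (1 : F) * (y 4 ^ 3 * (y 0 * y 2 - y 1 * y 3 - y 4 * y 7)) := by
  have h : (R211 F y).submatrix ![0,1,2,3,5] ![0,1,2,3,6] =
      (!![0, 0, y 4, 0, y 1;
         0, 0, 0, y 4, 0;
         -y 4, 0, 0, 0, 0;
         0, -y 4, 0, 0, -y 2;
         0, -y 0, y 3, 0, -y 7] : Matrix (Fin 5) (Fin 5) F) := by
    ext i j
    fin_cases i <;> fin_cases j <;> rfl
  rw [h]
  simp [Matrix.det_succ_row_zero, Fin.sum_univ_succ]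
  simp (config := { decide := true }) [Fin.succAbove, Fin.lt_def]
  ring

lemma d3b (F : Type*) [Field F] (y : Fin 9 → F) :
    ((R211 F y).submatrix ![0,1,3,6,8] ![2,3,5,6,8]).det = (4 : F) * (y 0 * y 2 ^ 2 * (y 0 * y 2 - y 1 * y 3 - y 4 * y 7)) := by
  have h : (R211 F y).submatrix ![0,1,3,6,8] ![2,3,5,6,8] =
      (!![y 4, 0, 0, y 1, (-2)*y 0;
         0, y 4, y 0, 0, (-2)*y 1;
         0, 0, 0, -y 2, 2*y 3;
         0, y 2, y 7, 0, 0;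
         (-2)*y 2, (-2)*y 3, 0, 0, 0] : Matrix (Fin 5) (Fin 5) F) := by
    ext i j
    fin_cases i <;> fin_cases j <;> rfl
  rw [h]
  simp [Matrix.det_succ_row_zero, Fin.sum_univ_succ]
  simp (config := { decide := true }) [Fin.succAbove, Fin.lt_def]
  ring

lemma d3c (F : Type*) [Field F] (y : Fin 9 → F) :
    ((R211 F y).submatrix ![0,1,5,6,8] ![0,2,3,6,8]).det = (-4 : F) * (y 1 ^ 2 * y 3 * (y 0 * y 2 - y 1 * y 3 - y 4 * y 7)) := by
  have h : (R211 F y).submatrix ![0,1,5,6,8] ![0,2,3,6,8] =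
      (!![0, y 4, 0, y 1, (-2)*y 0;
         0, 0, y 4, 0, (-2)*y 1;
         0, y 3, 0, -y 7, 0;
         -y 1, 0, y 2, 0, 0;
         2*y 0, (-2)*y 2, (-2)*y 3, 0, 0] : Matrix (Fin 5) (Fin 5) F) := by
    ext i j
    fin_cases i <;> fin_cases j <;> rfl
  rw [h]
  simp [Matrix.det_succ_row_zero, Fin.sum_univ_succ]
  simp (config := { decide := true }) [Fin.succAbove, Fin.lt_def]
  ring

lemma d4a (F : Type*) [Field F] (y : Fin 9 → F) :
    ((R211 F y).submatrix ![2,3,5,6,7] ![2,3,6,7,8]).det = (4 : F) * (y 2 ^ 2 * (y 2 ^ 2 * y 5 - y 3 ^ 2 * y 6 - y 2 * y 3 * y 7)) := by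
  have h : (R211 F y).submatrix ![2,3,5,6,7] ![2,3,6,7,8] =
      (!![0, 0, 0, -y 2, 2*y 2;
         0, 0, -y 2, y 3, 2*y 3;
         y 3, 0, -y 7, 2*y 5, 0;
         0, y 2, 0, (-2)*y 6, 0;
         y 2, -y 3, 2*y 6, 0, 0] : Matrix (Fin 5) (Fin 5) F) := by
    ext i j
    fin_cases i <;> fin_cases j <;> rfl
  rw [h]
  simp [Matrix.det_succ_row_zero, Fin.sum_univ_succ]
  simp (config := { decide := true }) [Fin.succAbove, Fin.lt_def]
  ring

lemma d4b (F : Type*) [Field F] (y : Fin 9 → F) :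
    ((R211 F y).submatrix ![2,3,5,6,7] ![2,3,5,7,8]).det = (4 : F) * (y 3 ^ 2 * (y 2 ^ 2 * y 5 - y 3 ^ 2 * y 6 - y 2 * y 3 * y 7)) := by
  have h : (R211 F y).submatrix ![2,3,5,6,7] ![2,3,5,7,8] =
      (!![0, 0, -y 3, -y 2, 2*y 2;
         0, 0, 0, y 3, 2*y 3;
         y 3, 0, 0, 2*y 5, 0;
         0, y 2, y 7, (-2)*y 6, 0;
         y 2, -y 3, (-2)*y 5, 0, 0] : Matrix (Fin 5) (Fin 5) F) := by
    ext i j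
    fin_cases i <;> fin_cases j <;> rfl
  rw [h]
  simp [Matrix.det_succ_row_zero, Fin.sum_univ_succ]
  simp (config := { decide := true }) [Fin.succAbove, Fin.lt_def]
  ring

lemma d5a (F : Type*) [Field F] (y : Fin 9 → F) :
    ((R211 F y).submatrix ![0,1,5,6,7] ![0,1,5,7,8]).det = (-4 : F) * (y 0 ^ 2 * (y 1 ^ 2 * y 5 - y 0 ^ 2 * y 6 + y 0 * y 1 * y 7)) := by
  have h : (R211 F y).submatrix ![0,1,5,6,7] ![0,1,5,7,8] =
      (!![0, 0, 0, y 0, (-2)*y 0;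
         0, 0, y 0, -y 1, (-2)*y 1;
         0, -y 0, 0, 2*y 5, 0;
         -y 1, 0, y 7, (-2)*y 6, 0;
         -y 0, y 1, (-2)*y 5, 0, 0] : Matrix (Fin 5) (Fin 5) F) := by
    ext i j
    fin_cases i <;> fin_cases j <;> rfl
  rw [h]
  simp [Matrix.det_succ_row_zero, Fin.sum_univ_succ]
  simp (config := { decide := true }) [Fin.succAbove, Fin.lt_def]
  ring

lemma d5b (F : Type*) [Field F] (y : Fin 9 → F) :
    ((R211 F y).submatrix ![0,1,5,6,7] ![0,1,6,7,8]).det = (-4 : F) * (y 1 ^ 2 * (y 1 ^ 2 * y 5 - y 0 ^ 2 * y 6 + y 0 * y 1 * y 7)) := by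
  have h : (R211 F y).submatrix ![0,1,5,6,7] ![0,1,6,7,8] =
      (!![0, 0, y 1, y 0, (-2)*y 0;
         0, 0, 0, -y 1, (-2)*y 1;
         0, -y 0, -y 7, 2*y 5, 0;
         -y 1, 0, 0, (-2)*y 6, 0;
         -y 0, y 1, 2*y 6, 0, 0] : Matrix (Fin 5) (Fin 5) F) := by
    ext i j
    fin_cases i <;> fin_cases j <;> rfl
  rw [h]
  simp [Matrix.det_succ_row_zero, Fin.sum_univ_succ]
  simp (config := { decide := true }) [Fin.succAbove, Fin.lt_def]
  ring

set_option maxHeartbeats 3000000 in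
/-- Assume `q` is odd.  Then `R(y)` has rank `≤ 4` iff the seven listed
polynomial expressions all vanish at `y`. -/
theorem stmt_16 (F : Type*) [Field F] [Fintype F] (q : ℕ) (hq : Fintype.card F = q)
    (hodd : Odd q) (y : Fin 9 → F) :
    (R211 F y).rank ≤ 4 ↔
      (y 0 * y 3 - y 4 * y 5 = 0 ∧
       y 1 * y 2 - y 4 * y 6 = 0 ∧
       y 0 * y 2 - y 1 * y 3 - y 4 * y 7 = 0 ∧
       y 2 ^ 2 * y 5 - y 3 ^ 2 * y 6 - y 2 * y 3 * y 7 = 0 ∧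
       y 1 ^ 2 * y 5 - y 0 ^ 2 * y 6 + y 0 * y 1 * y 7 = 0 ∧
       y 1 * y 3 ^ 2 - y 2 * y 4 * y 5 + y 3 * y 4 * y 7 = 0 ∧
       y 1 ^ 2 * y 3 - y 0 * y 4 * y 6 + y 1 * y 4 * y 7 = 0) := by
  have hchar : ringChar F ≠ 2 := by
    intro hc
    have h2 := FiniteField.even_card_of_char_two hc
    rw [hq] at h2
    have := Nat.odd_iff.mp hodd
    omega
  have two_ne : (2 : F) ≠ 0 := Ring.two_ne_zero hchar
  have hm2 : (-2 : F) ≠ 0 := neg_ne_zero.mpr two_ne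
  have h4ne : (4 : F) ≠ 0 := by
    have := mul_ne_zero two_ne two_ne
    rwa [show (2 : F) * 2 = 4 by norm_num] at this
  have hm4 : (-4 : F) ≠ 0 := neg_ne_zero.mpr h4ne
  have cancel : ∀ {a b : F}, a ≠ 0 → a * b = 0 → b = 0 :=
    fun ha hab => (mul_eq_zero.mp hab).resolve_left ha
  constructor
  · intro h
    have kP1 : y 0 * y 3 - y 4 * y 5 = 0 := by
      by_cases h4 : y 4 = 0
      · by_cases h0 : y 0 = 0
        · rw [h4, h0]; ring
        · by_cases h3 : y 3 = 0
          · rw [h4, h3]; ring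
          · have m := aux_det_submatrix_eq_zero h ![0,1,3,5,7] ![0,2,5,7,8]
            rw [d1b] at m
            exact cancel (mul_ne_zero (pow_ne_zero 2 h0) h3) (cancel hm4 m)
      · have m := aux_det_submatrix_eq_zero h ![0,1,2,3,5] ![0,1,2,3,7]
        rw [d1a] at m
        exact cancel (pow_ne_zero 3 h4) (cancel hm2 m)
    have kP2 : y 1 * y 2 - y 4 * y 6 = 0 := by
      by_cases h4 : y 4 = 0
      · by_cases h1 : y 1 = 0
        · rw [h4, h1]; ring
        · by_cases h2 : y 2 = 0
          · rw [h4, h2]; ring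
          · have m := aux_det_submatrix_eq_zero h ![0,1,2,6,7] ![1,3,6,7,8]
            rw [d2b] at m
            exact cancel (mul_ne_zero (pow_ne_zero 2 h1) h2) (cancel h4ne m)
      · have m := aux_det_submatrix_eq_zero h ![0,1,2,3,6] ![0,1,2,3,7]
        rw [d2a] at m
        exact cancel (pow_ne_zero 3 h4) (cancel two_ne m)
    have kP3 : y 0 * y 2 - y 1 * y 3 - y 4 * y 7 = 0 := by
      by_cases h4 : y 4 = 0
      · by_cases h02 : y 0 = 0 ∨ y 2 = 0
        · by_cases h13 : y 1 = 0 ∨ y 3 = 0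
          · rcases h02 with h' | h' <;> rcases h13 with h'' | h'' <;>
              rw [h4, h', h''] <;> ring
          · push_neg at h13
            have m := aux_det_submatrix_eq_zero h ![0,1,5,6,8] ![0,2,3,6,8]
            rw [d3c] at m
            exact cancel (mul_ne_zero (pow_ne_zero 2 h13.1) h13.2) (cancel hm4 m)
        · push_neg at h02
          have m := aux_det_submatrix_eq_zero h ![0,1,3,6,8] ![2,3,5,6,8]
          rw [d3b] at m
          exact cancel (mul_ne_zero h02.1 (pow_ne_zero 2 h02.2)) (cancel h4ne m)
      · have m := aux_det_submatrix_eq_zero h ![0,1,2,3,5] ![0,1,2,3,6]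
        rw [d3a] at m
        exact cancel (pow_ne_zero 3 h4) (cancel one_ne_zero m)
    have kP4 : y 2 ^ 2 * y 5 - y 3 ^ 2 * y 6 - y 2 * y 3 * y 7 = 0 := by
      by_cases h2 : y 2 = 0
      · by_cases h3 : y 3 = 0
        · rw [h2, h3]; ring
        · have m := aux_det_submatrix_eq_zero h ![2,3,5,6,7] ![2,3,5,7,8]
          rw [d4b] at m
          exact cancel (pow_ne_zero 2 h3) (cancel h4ne m)
      · have m := aux_det_submatrix_eq_zero h ![2,3,5,6,7] ![2,3,6,7,8]
        rw [d4a] at m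
        exact cancel (pow_ne_zero 2 h2) (cancel h4ne m)
    have kP5 : y 1 ^ 2 * y 5 - y 0 ^ 2 * y 6 + y 0 * y 1 * y 7 = 0 := by
      by_cases h0 : y 0 = 0
      · by_cases h1 : y 1 = 0
        · rw [h0, h1]; ring
        · have m := aux_det_submatrix_eq_zero h ![0,1,5,6,7] ![0,1,6,7,8]
          rw [d5b] at m
          exact cancel (pow_ne_zero 2 h1) (cancel hm4 m)
      · have m := aux_det_submatrix_eq_zero h ![0,1,5,6,7] ![0,1,5,7,8]
        rw [d5a] at m
        exact cancel (pow_ne_zero 2 h0) (cancel hm4 m)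
    exact ⟨kP1, kP2, kP3, kP4, kP5,
      by linear_combination y 2 * kP1 - y 3 * kP3,
      by linear_combination y 0 * kP2 - y 1 * kP3⟩
  · rintro ⟨hP1, hP2, hP3, hP4, hP5, hP6, hP7⟩
    by_cases h4 : y 4 = 0
    case neg =>
      refine aux_rank_le_four (c := y 4) (h4)
        (!![y 4, 0, 0, 0;
              0, y 4, 0, 0;
              0, 0, y 4, 0;
              0, 0, 0, y 4;
              0, 0, 0, 0;
              y 3, 0, 0, y 0;
              0, y 2, y 1, 0;
              y 2, -y 3, y 0, -y 1;
              (-2)*y 2, (-2)*y 3, (-2)*y 0, (-2)*y 1] : Matrix (Fin 9) (Fin 4) F)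
        (!![0, 0, y 4, 0, 0, 0, y 1, y 0, (-2)*y 0;
              0, 0, 0, y 4, 0, y 0, 0, -y 1, (-2)*y 1;
              -y 4, 0, 0, 0, 0, -y 3, 0, -y 2, 2*y 2;
              0, -y 4, 0, 0, 0, 0, -y 2, y 3, 2*y 3] : Matrix (Fin 4) (Fin 9) F) ?_
      rw [← Matrix.ext_iff]
      simp only [Fin.forall_fin_succ, IsEmpty.forall_iff, and_true, true_and,
        Matrix.smul_apply, smul_eq_mul, Matrix.mul_apply, Fin.sum_univ_succ,
        Fin.sum_univ_zero, Finset.sum_empty, R211, Matrix.of_apply,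
        Matrix.cons_val_zero, Matrix.cons_val_succ,
        mul_zero, zero_mul, add_zero, zero_add, mul_one, neg_zero]
      repeat' apply And.intro
      all_goals try ring
      all_goals try linear_combination (1:F) * hP3
      all_goals try linear_combination (-2:F) * hP1
      all_goals try linear_combination (-1:F) * hP3
      all_goals try linear_combination (2:F) * hP2
      all_goals try linear_combination (2:F) * hP1
      all_goals try linear_combination (-2:F) * hP2

    by_cases h2 : y 2 = 0
    case neg =>
      have e1 : y 1 = 0 := by
        have key : y 1 * y 2 = 0 := by linear_combination hP2 + y 6 * h4
        exact (mul_eq_zero.mp key).resolve_right h2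
      have e0 : y 0 = 0 := by
        have key : y 0 * y 2 = 0 := by linear_combination hP3 + y 3 * e1 + y 7 * h4
        exact (mul_eq_zero.mp key).resolve_right h2
      refine aux_rank_le_four (c := y 2*y 2) (mul_ne_zero h2 h2)
        (!![0, 0, 0, 0;
              0, 0, 0, 0;
              y 2*y 2, 0, 0, 0;
              0, y 2*y 2, 0, 0;
              0, 0, 0, 0;
              y 3*y 7+(-2)*y 2*y 5, y 2*y 7+2*y 3*y 6, y 3*y 3, y 2*y 3;
              0, 0, y 2*y 2, 0;
              0, 0, 0, y 2*y 2;
              4*y 3*y 6, (-4)*y 2*y 6, (-4)*y 2*y 3, (-2)*y 2*y 2] : Matrix (Fin 9) (Fin 4) F)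
        (!![0, 0, 0, 0, 0, -y 3, 0, -y 2, 2*y 2;
              0, 0, 0, 0, 0, 0, -y 2, y 3, 2*y 3;
              0, 0, 0, y 2, 0, y 7, 0, (-2)*y 6, 0;
              0, 0, y 2, -y 3, 0, (-2)*y 5, 2*y 6, 0, 0] : Matrix (Fin 4) (Fin 9) F) ?_
      rw [← Matrix.ext_iff]
      simp only [Fin.forall_fin_succ, IsEmpty.forall_iff, and_true, true_and,
        Matrix.smul_apply, smul_eq_mul, Matrix.mul_apply, Fin.sum_univ_succ,
        Fin.sum_univ_zero, Finset.sum_empty, R211, Matrix.of_apply,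
        Matrix.cons_val_zero, Matrix.cons_val_succ, e0, e1, h4,
        mul_zero, zero_mul, add_zero, zero_add, mul_one, neg_zero]
      repeat' apply And.intro
      all_goals try ring
      all_goals try linear_combination (4:F) * hP4
      all_goals try linear_combination (-4:F) * hP4

    by_cases h3 : y 3 = 0
    case neg =>
      have e0 : y 0 = 0 := by
        have key : y 0 * y 3 = 0 := by linear_combination hP1 + y 5 * h4
        exact (mul_eq_zero.mp key).resolve_right h3
      have e1 : y 1 = 0 := by
        have key : y 1 * (y 3 * y 3) = 0 := by
          linear_combination hP6 + (y 2 * y 5 - y 3 * y 7) * h4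
        exact (mul_eq_zero.mp key).resolve_right (mul_ne_zero h3 h3)
      have e6 : y 6 = 0 := by
        have key : y 6 * (y 3 * y 3) = 0 := by
          linear_combination (-1 : F) * hP4 + (y 2 * y 5 - y 3 * y 7) * h2
        exact (mul_eq_zero.mp key).resolve_right (mul_ne_zero h3 h3)
      refine aux_rank_le_four (c := 2*y 3) (mul_ne_zero two_ne h3)
        (!![0, 0, 0, 0;
              0, 0, 0, 0;
              2*y 3, 0, 0, 0;
              0, 2*y 3, 0, 0;
              0, 0, 0, 0;
              0, 0, 2*y 3, 0;
              (-2)*y 7, 0, 0, 0;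
              4*y 5, 0, 0, y 3;
              0, 0, 0, 2*y 3] : Matrix (Fin 9) (Fin 4) F)
        (!![0, 0, 0, 0, 0, -y 3, 0, 0, 0;
              0, 0, 0, 0, 0, 0, 0, y 3, 2*y 3;
              0, 0, y 3, 0, 0, 0, -y 7, 2*y 5, 0;
              0, 0, 0, (-2)*y 3, 0, 0, 0, 0, 0] : Matrix (Fin 4) (Fin 9) F) ?_
      rw [← Matrix.ext_iff]
      simp only [Fin.forall_fin_succ, IsEmpty.forall_iff, and_true, true_and,
        Matrix.smul_apply, smul_eq_mul, Matrix.mul_apply, Fin.sum_univ_succ,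
        Fin.sum_univ_zero, Finset.sum_empty, R211, Matrix.of_apply,
        Matrix.cons_val_zero, Matrix.cons_val_succ, e0, e1, h2, h4, e6,
        mul_zero, zero_mul, add_zero, zero_add, mul_one, neg_zero]
      repeat' apply And.intro
      all_goals try ring


    by_cases h0 : y 0 = 0
    case neg =>
      refine aux_rank_le_four (c := y 0*y 0) (mul_ne_zero h0 h0)
        (!![y 0*y 0, 0, 0, 0;
              0, y 0*y 0, 0, 0;
              0, 0, 0, 0;
              0, 0, 0, 0;
              0, 0, 0, 0;
              0, 0, y 0*y 0, 0;
              y 1*y 7+(-2)*y 0*y 6, y 0*y 7+2*y 1*y 5, y 1*y 1, y 0*y 1;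
              0, 0, 0, y 0*y 0;
              4*y 1*y 5, (-4)*y 0*y 5, (-4)*y 0*y 1, (-2)*y 0*y 0] : Matrix (Fin 9) (Fin 4) F)
        (!![0, 0, 0, 0, 0, 0, y 1, y 0, (-2)*y 0;
              0, 0, 0, 0, 0, y 0, 0, -y 1, (-2)*y 1;
              0, -y 0, 0, 0, 0, 0, -y 7, 2*y 5, 0;
              -y 0, y 1, 0, 0, 0, (-2)*y 5, 2*y 6, 0, 0] : Matrix (Fin 4) (Fin 9) F) ?_
      rw [← Matrix.ext_iff]
      simp only [Fin.forall_fin_succ, IsEmpty.forall_iff, and_true, true_and,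
        Matrix.smul_apply, smul_eq_mul, Matrix.mul_apply, Fin.sum_univ_succ,
        Fin.sum_univ_zero, Finset.sum_empty, R211, Matrix.of_apply,
        Matrix.cons_val_zero, Matrix.cons_val_succ, h2, h3, h4,
        mul_zero, zero_mul, add_zero, zero_add, mul_one, neg_zero]
      repeat' apply And.intro
      all_goals try ring
      all_goals try linear_combination (4:F) * hP5
      all_goals try linear_combination (-4:F) * hP5

    by_cases h1 : y 1 = 0
    case neg =>
      have e5 : y 5 = 0 := by
        have key : y 5 * (y 1 * y 1) = 0 := by
          linear_combination hP5 + (y 0 * y 6 - y 1 * y 7) * h0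
        exact (mul_eq_zero.mp key).resolve_right (mul_ne_zero h1 h1)
      refine aux_rank_le_four (c := y 1) (h1)
        (!![y 1, 0, 0, 0;
              0, y 1, 0, 0;
              0, 0, 0, 0;
              0, 0, 0, 0;
              0, 0, 0, 0;
              -y 7, 0, 0, 0;
              0, 0, y 1, 0;
              0, 0, 0, y 1;
              (-4)*y 6, 0, 0, 2*y 1] : Matrix (Fin 9) (Fin 4) F)
        (!![0, 0, 0, 0, 0, 0, y 1, 0, 0;
              0, 0, 0, 0, 0, 0, 0, -y 1, (-2)*y 1;
              -y 1, 0, 0, 0, 0, y 7, 0, (-2)*y 6, 0;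
              0, y 1, 0, 0, 0, 0, 2*y 6, 0, 0] : Matrix (Fin 4) (Fin 9) F) ?_
      rw [← Matrix.ext_iff]
      simp only [Fin.forall_fin_succ, IsEmpty.forall_iff, and_true, true_and,
        Matrix.smul_apply, smul_eq_mul, Matrix.mul_apply, Fin.sum_univ_succ,
        Fin.sum_univ_zero, Finset.sum_empty, R211, Matrix.of_apply,
        Matrix.cons_val_zero, Matrix.cons_val_succ, h0, h2, h3, h4, e5,
        mul_zero, zero_mul, add_zero, zero_add, mul_one, neg_zero]
      repeat' apply And.intro
      all_goals try ring


    case pos =>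
      refine aux_rank_le_four (c := 1) (one_ne_zero)
        (!![0, 0, 0, 0;
              0, 0, 0, 0;
              0, 0, 0, 0;
              0, 0, 0, 0;
              0, 0, 0, 0;
              1, 0, 0, 0;
              0, 1, 0, 0;
              0, 0, 1, 0;
              0, 0, 0, 0] : Matrix (Fin 9) (Fin 4) F)
        (!![0, 0, 0, 0, 0, 0, -y 7, 2*y 5, 0;
              0, 0, 0, 0, 0, y 7, 0, (-2)*y 6, 0;
              0, 0, 0, 0, 0, (-2)*y 5, 2*y 6, 0, 0;
              0, 0, 0, 0, 0, 0, 0, 0, 0] : Matrix (Fin 4) (Fin 9) F) ?_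
      rw [← Matrix.ext_iff]
      simp only [Fin.forall_fin_succ, IsEmpty.forall_iff, and_true, true_and,
        Matrix.smul_apply, smul_eq_mul, Matrix.mul_apply, Fin.sum_univ_succ,
        Fin.sum_univ_zero, Finset.sum_empty, R211, Matrix.of_apply,
        Matrix.cons_val_zero, Matrix.cons_val_succ, h0, h1, h2, h3, h4,
        mul_zero, zero_mul, add_zero, zero_add, mul_one, neg_zero]
      repeat' apply And.intro
      all_goals try ring



end Stmt16Aux
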